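/- Suppose (F_λ^k)'(z) = λ^k exp(Σ_{j=0}^{k-1} F_λ^j(z)) and there is a constant C such that any point w in the cell C_m satisfies |Im w| ≤ C/m². Then there exists an integer N such that for all n > N, all 1 ≤ k ≤ n − N, and all z ∈ C_n, the argument θ_k(z) of (F_λ^k)'(z) satisfies |θ_k(z)| ≤ π/6, and hence Re (F_λ^k)'(z) ≥ (√3/2)|(F_λ^k)'(z)|. -/

import Mathlib

open Finset Real

/-- The exponential family `f_λ(z) = λ(e^z − 1)`. -/
noncomputable def expMap (lam : ℝ) (z : ℂ) : ℂ := lam * (Complex.exp z - 1)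

/-- `(F_λ^k)'(z) = λ^k exp(Σ_{j<k} F_λ^j(z))`. -/
noncomputable def iterDeriv (lam : ℝ) (k : ℕ) (z : ℂ) : ℂ :=
  (lam : ℂ) ^ k * Complex.exp (∑ j ∈ Finset.range k, (expMap lam)^[j] z)

/-- Argument of a positive real multiple of `exp S` with small imaginary part. -/
lemma arg_pos_mul_exp (r : ℝ) (hr : 0 < r) (S : ℂ) (h1 : -Real.pi < S.im)
    (h2 : S.im ≤ Real.pi) :
    Complex.arg ((r : ℂ) * Complex.exp S) = S.im := by
  rw [Complex.exp_eq_exp_re_mul_sin_add_cos, ← mul_assoc, ← Complex.ofReal_exp,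
    ← Complex.ofReal_mul, Complex.arg_real_mul _ (by positivity),
    Complex.arg_cos_add_sin_mul_I ⟨h1, h2⟩]

/-- If the cells `C_m` satisfy `|Im w| ≤ C/m²` on `C_m` and orbits of
points of `C_n` pass through the cells (`F_λ^j(z) ∈ C_{n−j}`), then there is `N` such
that for all `n > N`, `1 ≤ k ≤ n − N` and `z ∈ C_n`, the argument of `(F_λ^k)'(z)` is at
most `π/6` in modulus, hence `Re (F_λ^k)'(z) ≥ (√3/2)|(F_λ^k)'(z)|`. -/
theorem stmt8 (lam : ℝ) (hlam : 1 ≤ lam) (Cc : ℕ → Set ℂ) (C₀ : ℝ) (hC₀ : 0 ≤ C₀)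
    (horbit : ∀ n : ℕ, ∀ z ∈ Cc n, ∀ j ≤ n, (expMap lam)^[j] z ∈ Cc (n - j))
    (hIm : ∀ m : ℕ, 1 ≤ m → ∀ w ∈ Cc m, |w.im| ≤ C₀ / (m : ℝ) ^ 2) :
    ∃ N : ℕ, ∀ n : ℕ, N < n → ∀ k : ℕ, 1 ≤ k → k ≤ n - N → ∀ z ∈ Cc n,
      |Complex.arg (iterDeriv lam k z)| ≤ Real.pi / 6 ∧
      Real.sqrt 3 / 2 * ‖iterDeriv lam k z‖ ≤ (iterDeriv lam k z).re := by
  have hπ := Real.pi_pos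
  refine ⟨Nat.ceil (6 * C₀ / Real.pi) + 1, fun n hn k hk1 hkn z hz => ?_⟩
  set N : ℕ := Nat.ceil (6 * C₀ / Real.pi) + 1 with hN
  have hN1 : 1 ≤ N := Nat.le_add_left 1 _
  have hNC : C₀ / N ≤ Real.pi / 6 := by
    rw [div_le_div_iff₀ (by positivity) (by norm_num)]
    have h1 : 6 * C₀ / Real.pi ≤ (N : ℝ) := le_trans (Nat.le_ceil _) (by exact_mod_cast Nat.le_succ _)
    calc C₀ * 6 = (6 * C₀ / Real.pi) * Real.pi := by field_simp
    _ ≤ (N : ℝ) * Real.pi := by nlinarith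
    _ = Real.pi * N := mul_comm _ _
  set S : ℂ := ∑ j ∈ Finset.range k, (expMap lam)^[j] z with hS
  have hkN : k + N ≤ n := by omega
  set f : ℕ → ℝ := fun j => ((n - j : ℕ) : ℝ)⁻¹ with hf
  -- bound |S.im|
  have hSim : |S.im| ≤ C₀ / N := by
    have hterm : ∀ j ∈ Finset.range k,
        |((expMap lam)^[j] z).im| ≤ C₀ * (f (j + 1) - f j) := by
      intro j hj
      rw [Finset.mem_range] at hj
      have hjn : j ≤ n := by omega
      have hb := hIm (n - j) (by omega) _ (horbit n z hz j hjn)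
      refine hb.trans ?_
      have h2 : (2 : ℝ) ≤ ((n - j : ℕ) : ℝ) := by exact_mod_cast (by omega : 2 ≤ n - j)
      have hcast : ((n - (j+1) : ℕ) : ℝ) = ((n - j : ℕ) : ℝ) - 1 := by
        push_cast [Nat.cast_sub hjn, Nat.cast_sub (by omega : j + 1 ≤ n)]; ring
      simp only [hf, hcast]
      set m : ℝ := ((n - j : ℕ) : ℝ)
      have h1 : (0:ℝ) < m - 1 := by linarith
      have h0 : (0:ℝ) < m := by linarith
      have key : (m^2)⁻¹ ≤ (m-1)⁻¹ - m⁻¹ := by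
        have e : (m-1)⁻¹ - m⁻¹ = (m*(m-1))⁻¹ := by field_simp; ring
        rw [e]
        have : m * (m - 1) ≤ m ^ 2 := by nlinarith
        exact inv_anti₀ (by positivity) this
      rw [div_eq_mul_inv]
      exact mul_le_mul_of_nonneg_left key hC₀
    have habs : |S.im| ≤ ∑ j ∈ Finset.range k, C₀ * (f (j + 1) - f j) := by
      rw [hS, Complex.im_sum]
      exact (Finset.abs_sum_le_sum_abs _ _).trans (Finset.sum_le_sum hterm)
    rw [← Finset.mul_sum, Finset.sum_range_sub] at habs
    have hf0 : 0 ≤ f 0 := by positivity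
    have hfk : f k ≤ (N : ℝ)⁻¹ := by
      apply inv_anti₀ (by exact_mod_cast hN1)
      exact_mod_cast (by omega : N ≤ n - k)
    calc |S.im| ≤ C₀ * (f k - f 0) := habs
      _ ≤ C₀ * (N : ℝ)⁻¹ := by nlinarith
      _ = C₀ / N := by rw [div_eq_mul_inv]
  -- rewrite iterDeriv
  have hlampos : (0:ℝ) < lam ^ k := by positivity
  have hw : iterDeriv lam k z = ((lam ^ k : ℝ) : ℂ) * Complex.exp S := by
    rw [iterDeriv]; push_cast; rfl
  have hImle : |S.im| ≤ Real.pi / 6 := hSim.trans hNC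
  have harg : Complex.arg (iterDeriv lam k z) = S.im := by
    rw [hw]
    apply arg_pos_mul_exp _ hlampos
    · nlinarith [abs_le.mp hImle]
    · nlinarith [abs_le.mp hImle]
  have hargle : |Complex.arg (iterDeriv lam k z)| ≤ Real.pi / 6 := by rw [harg]; exact hImle
  refine ⟨hargle, ?_⟩
  have hne : iterDeriv lam k z ≠ 0 := by
    rw [hw]; exact mul_ne_zero (by exact_mod_cast hlampos.ne') (Complex.exp_ne_zero S)
  have hcos := Complex.cos_arg hne
  have hcosge : Real.sqrt 3 / 2 ≤ Real.cos (Complex.arg (iterDeriv lam k z)) := by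
    rw [← Real.cos_pi_div_six, ← Real.cos_abs (Complex.arg (iterDeriv lam k z))]
    apply Real.cos_le_cos_of_nonneg_of_le_pi (abs_nonneg _) (by linarith) hargle
  have habs0 : (0:ℝ) < ‖iterDeriv lam k z‖ := norm_pos_iff.mpr hne
  have : Real.sqrt 3 / 2 ≤ (iterDeriv lam k z).re / ‖iterDeriv lam k z‖ := by
    rw [← hcos]; exact hcosge
  calc Real.sqrt 3 / 2 * ‖iterDeriv lam k z‖
      ≤ (iterDeriv lam k z).re / ‖iterDeriv lam k z‖ * ‖iterDeriv lam k z‖ := by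
        exact mul_le_mul_of_nonneg_right this habs0.le
    _ = (iterDeriv lam k z).re := by field_simp
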